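/- Let n be an even positive integer. Then the continued fraction of √(n²+4) is [n; n/2, 2n repeated], with period of length 2. -/

import Mathlib

/-- The sequence of complete quotients of the continued fraction algorithm. -/
noncomputable def cfX (x : ℝ) : ℕ → ℝ
  | 0 => x
  | n + 1 =>
    if cfX x n - ⌊cfX x n⌋ = 0 then 0 else 1 / (cfX x n - ⌊cfX x n⌋)

/-- The partial quotients (continued fraction expansion) of a real number. -/
noncomputable def cfA (x : ℝ) (n : ℕ) : ℤ := ⌊cfX x n⌋

/-- For even positive `n`, `√(n²+4) = [n; n/2, 2n repeated]`, with period of length 2. -/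
theorem sqrt_sq_add_four_even (n : ℕ) (hn : 0 < n) (heven : Even n) :
    cfA (Real.sqrt ((n : ℝ) ^ 2 + 4)) 0 = n ∧
    (∀ k : ℕ,
      cfA (Real.sqrt ((n : ℝ) ^ 2 + 4)) (2 * k + 1) = (n / 2 : ℕ) ∧
      cfA (Real.sqrt ((n : ℝ) ^ 2 + 4)) (2 * k + 2) = 2 * n) ∧
    sInf {p : ℕ | 0 < p ∧ ∀ m : ℕ, 1 ≤ m →
      cfA (Real.sqrt ((n : ℝ) ^ 2 + 4)) (m + p) = cfA (Real.sqrt ((n : ℝ) ^ 2 + 4)) m} = 2 := by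
  obtain ⟨m, hm⟩ := heven
  have hn2 : 2 ≤ n := by omega
  have hm1 : 1 ≤ m := by omega
  set x := Real.sqrt ((n : ℝ) ^ 2 + 4) with hxdef
  have hx0 : 0 ≤ x := Real.sqrt_nonneg _
  have hx2 : x ^ 2 = (n : ℝ) ^ 2 + 4 := Real.sq_sqrt (by positivity)
  have hnR : (2 : ℝ) ≤ (n : ℝ) := by exact_mod_cast hn2
  have hmR : (n : ℝ) = 2 * (m : ℝ) := by push_cast [hm]; ring
  have hxgt : (n : ℝ) < x := by nlinarith
  have hxlt : x < (n : ℝ) + 1 := by nlinarith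
  have hprod : (x - n) * (x + n) = 4 := by nlinarith
  have hxnpos : 0 < x - (n : ℝ) := sub_pos.mpr hxgt
  have hxn : x - (n : ℝ) ≠ 0 := ne_of_gt hxnpos
  -- floors
  have hf0 : ⌊x⌋ = (n : ℤ) := by
    rw [Int.floor_eq_iff]
    push_cast
    exact ⟨le_of_lt hxgt, hxlt⟩
  have hf1 : ⌊(x + n) / 4⌋ = (m : ℤ) := by
    rw [Int.floor_eq_iff]
    push_cast
    constructor
    · rw [le_div_iff₀ (by norm_num)]; nlinarith
    · rw [div_lt_iff₀ (by norm_num)]; nlinarith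
  have hf2 : ⌊x + n⌋ = 2 * (n : ℤ) := by
    rw [Int.floor_eq_iff]
    push_cast
    constructor <;> nlinarith
  -- transition steps
  have step1 : ∀ j : ℕ, cfX x j = (x + n) / 4 → cfX x (j + 1) = x + n := by
    intro j hj
    have hne : cfX x j - ⌊cfX x j⌋ ≠ 0 := by
      rw [hj, hf1]
      push_cast
      have h4 : (x + (n:ℝ)) / 4 - m = (x - n) / 4 := by rw [hmR]; ring
      rw [h4]
      positivity
    simp only [cfX, if_neg hne]
    rw [hj, hf1]
    have h4 : (x + n) / 4 - (m : ℝ) = (x - n) / 4 := by rw [hmR]; ring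
    push_cast
    rw [h4, one_div_div, div_eq_iff hxn]
    nlinarith
  have step2 : ∀ j : ℕ, cfX x j = x + n → cfX x (j + 1) = (x + n) / 4 := by
    intro j hj
    have hne : cfX x j - ⌊cfX x j⌋ ≠ 0 := by
      rw [hj, hf2]; push_cast
      have : x + n - 2 * n = x - n := by ring
      rw [this]; positivity
    simp only [cfX, if_neg hne]
    rw [hj, hf2]
    push_cast
    have h4 : x + (n : ℝ) - 2 * n = x - n := by ring
    rw [h4, div_eq_div_iff hxn (by norm_num : (4:ℝ) ≠ 0)]
    nlinarith
  have h1 : cfX x 1 = (x + n) / 4 := by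
    have hne : x - ((⌊x⌋ : ℤ) : ℝ) ≠ 0 := by
      rw [hf0]; push_cast; exact hxn
    simp only [cfX]
    simp only [hne, ↓reduceIte]
    rw [hf0]
    push_cast
    rw [div_eq_div_iff hxn (by norm_num : (4:ℝ) ≠ 0)]
    nlinarith
  have main : ∀ k : ℕ, cfX x (2 * k + 1) = (x + n) / 4 := by
    intro k
    induction k with
    | zero => simpa using h1
    | succ k ih =>
        have h2 : cfX x (2 * k + 2) = x + n := step1 _ ih
        have h3 : cfX x (2 * k + 3) = (x + n) / 4 := step2 _ h2
        have : 2 * (k + 1) + 1 = 2 * k + 3 := by ring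
        rw [this, h3]
  have ha1 : ∀ k : ℕ, cfA x (2 * k + 1) = ((n / 2 : ℕ) : ℤ) := by
    intro k
    have : (n / 2 : ℕ) = m := by omega
    rw [this]
    show ⌊cfX x (2 * k + 1)⌋ = (m : ℤ)
    rw [main k, hf1]
  have ha2 : ∀ k : ℕ, cfA x (2 * k + 2) = 2 * (n : ℤ) := by
    intro k
    show ⌊cfX x (2 * k + 2)⌋ = 2 * (n : ℤ)
    rw [step1 _ (main k), hf2]
  refine ⟨?_, fun k => ⟨ha1 k, by rw [ha2 k]⟩, ?_⟩
  · show ⌊cfX x 0⌋ = (n : ℤ)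
    exact hf0
  -- sInf part
  have hper : ∀ j : ℕ, 1 ≤ j → cfA x (j + 2) = cfA x j := by
    intro j hj
    obtain ⟨i, rfl | rfl⟩ := Nat.even_or_odd' j
    · -- j = 2i even, i ≥ 1
      obtain ⟨i', rfl⟩ : ∃ i', i = i' + 1 := ⟨i - 1, by omega⟩
      have e1 : 2 * (i' + 1) + 2 = 2 * (i' + 1) + 2 := rfl
      rw [show 2 * (i' + 1) + 2 = 2 * (i' + 1) + 2 from rfl]
      rw [show 2 * (i' + 1) = 2 * i' + 2 from by ring, show 2 * i' + 2 + 2 = 2 * (i' + 1) + 2 from by ring, ha2, ha2]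
    · have : 2 * i + 1 + 2 = 2 * (i + 1) + 1 := by ring
      rw [this, ha1, ha1]
  have h2mem : 2 ∈ {p : ℕ | 0 < p ∧ ∀ m : ℕ, 1 ≤ m → cfA x (m + p) = cfA x m} :=
    ⟨by norm_num, hper⟩
  refine le_antisymm (Nat.sInf_le h2mem) (le_csInf ⟨2, h2mem⟩ ?_)
  rintro p ⟨hp0, hp⟩
  by_contra hlt
  push_neg at hlt
  interval_cases p
  have := hp 1 le_rfl
  have e1 : cfA x 1 = ((n / 2 : ℕ) : ℤ) := ha1 0
  have e2 : cfA x 2 = 2 * (n : ℤ) := ha2 0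
  rw [show (1 : ℕ) + 1 = 2 from rfl, e2, e1] at this
  omega
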